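/- arXiv:2208.01857 — 2 statements merged into one kernel-verified Lean document; each statement's English description precedes it below -/
import Mathlib

section
/- Let $x$ be a random vector with $\mathbb{E}[\|x\|^2 x x^\top] \preceq R^2 G$ where $G = \mathbb{E}[x x^\top]$, and let $\Sigma$ be a PSD matrix with $\Sigma \preceq \sigma^2 G$. Let $0 < \gamma < 1/R^2$ and define the recursion $C_0 = 0$, $C_{t} = C_{t-1} - \gamma(G C_{t-1} + C_{t-1} G) + \gamma^2 \mathbb{E}[x x^\top C_{t-1} x x^\top] + \gamma^2 \Sigma$. Then for every $t \geq 0$, $C_t \preceq \frac{\gamma \sigma^2}{1 - \gamma R^2} I$. -/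
open MeasureTheory Matrix

lemma qf_rep {d : ℕ} (M : Matrix (Fin d) (Fin d) ℝ) (u w : Fin d → ℝ) :
    u ⬝ᵥ M.mulVec w = ∑ i, ∑ j, u i * M i j * w j := by
  simp [dotProduct, Matrix.mulVec, Finset.mul_sum, mul_assoc]

lemma oqf {d : ℕ} (x u w : Fin d → ℝ) :
    u ⬝ᵥ (Matrix.of fun i j => x i * x j).mulVec w = (u ⬝ᵥ x) * (x ⬝ᵥ w) := by
  rw [qf_rep]
  simp only [Matrix.of_apply, dotProduct, Finset.sum_mul, Finset.mul_sum]
  rw [Finset.sum_comm]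
  exact Finset.sum_congr rfl fun i _ => Finset.sum_congr rfl fun j _ => by ring

lemma sqf {d : ℕ} (x u w : Fin d → ℝ) (s : ℝ) :
    u ⬝ᵥ (Matrix.of fun i j => x i * s * x j).mulVec w = (u ⬝ᵥ x) * (x ⬝ᵥ w) * s := by
  rw [qf_rep]
  simp only [Matrix.of_apply, dotProduct, Finset.sum_mul, Finset.mul_sum]
  rw [Finset.sum_comm]
  exact Finset.sum_congr rfl fun i _ => Finset.sum_congr rfl fun j _ => by ring

lemma nqf {d : ℕ} (x u w : Fin d → ℝ) (s : ℝ) :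
    u ⬝ᵥ (Matrix.of fun i j => s * (x i * x j)).mulVec w = s * ((u ⬝ᵥ x) * (x ⬝ᵥ w)) := by
  rw [qf_rep]
  simp only [Matrix.of_apply, dotProduct, Finset.sum_mul, Finset.mul_sum]
  rw [Finset.sum_comm]
  exact Finset.sum_congr rfl fun i _ => Finset.sum_congr rfl fun j _ => by ring

lemma bf_integrable {d : ℕ} {Ω : Type*} [MeasurableSpace Ω] {μ : Measure Ω}
    (g : Ω → Fin d → Fin d → ℝ)
    (hf : ∀ i j, Integrable (fun ω => g ω i j) μ) (u w : Fin d → ℝ) :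
    Integrable (fun ω => u ⬝ᵥ (Matrix.of (g ω)).mulVec w) μ := by
  have : (fun ω => u ⬝ᵥ (Matrix.of (g ω)).mulVec w)
      = fun ω => ∑ i, ∑ j, u i * g ω i j * w j := by
    funext ω; rw [qf_rep]; simp only [Matrix.of_apply]
  rw [this]
  exact integrable_finset_sum _ fun i _ => integrable_finset_sum _ fun j _ =>
    ((hf i j).const_mul (u i)).mul_const (w j)

lemma bf_integral {d : ℕ} {Ω : Type*} [MeasurableSpace Ω] {μ : Measure Ω}
    (g : Ω → Fin d → Fin d → ℝ)
    (hf : ∀ i j, Integrable (fun ω => g ω i j) μ) (u w : Fin d → ℝ) :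
    u ⬝ᵥ (Matrix.of fun i j => ∫ ω, g ω i j ∂μ).mulVec w
      = ∫ ω, u ⬝ᵥ (Matrix.of (g ω)).mulVec w ∂μ := by
  have hterm : ∀ i j, Integrable (fun ω => u i * g ω i j * w j) μ := fun i j =>
    ((hf i j).const_mul (u i)).mul_const (w j)
  have h1 : ∀ i j, u i * (∫ ω, g ω i j ∂μ) * w j = ∫ ω, u i * g ω i j * w j ∂μ := by
    intro i j
    have : (fun ω => u i * g ω i j * w j) = fun ω => (u i * w j) * g ω i j :=
      funext fun ω => by ring
    rw [this, integral_const_mul]; ring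
  rw [qf_rep]
  simp only [Matrix.of_apply, h1]
  have h2 : ∀ i, ∑ j, ∫ ω, u i * g ω i j * w j ∂μ = ∫ ω, ∑ j, u i * g ω i j * w j ∂μ :=
    fun i => (integral_finset_sum _ fun j _ => hterm i j).symm
  simp only [h2]
  rw [← integral_finset_sum _ fun i _ => integrable_finset_sum _ fun j _ => hterm i j]
  refine integral_congr_ae (Filter.Eventually.of_forall fun ω => ?_)
  show ∑ i, ∑ j, u i * g ω i j * w j = u ⬝ᵥ (Matrix.of (g ω)).mulVec w
  rw [qf_rep]; simp only [Matrix.of_apply]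

/-- crude bound on the variance iterates of constant-stepsize SGD. -/
theorem stmt5 {d : ℕ} {Ω : Type*} [MeasurableSpace Ω]
    (μ : Measure Ω) [IsProbabilityMeasure μ]
    (x : Ω → Fin d → ℝ)
    (G : Matrix (Fin d) (Fin d) ℝ)
    (hG : G = Matrix.of fun i j => ∫ ω, x ω i * x ω j ∂μ)
    (hint2 : ∀ i j, Integrable (fun ω => x ω i * x ω j) μ)
    (hint4 : ∀ (A : Matrix (Fin d) (Fin d) ℝ) i j,
      Integrable (fun ω => x ω i * (x ω ⬝ᵥ A.mulVec (x ω)) * x ω j) μ)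
    (R : ℝ) (hR : 0 < R)
    (hfourth : ((R ^ 2) • G -
      Matrix.of fun i j => ∫ ω, (∑ k, x ω k ^ 2) * (x ω i * x ω j) ∂μ).PosSemidef)
    (hintR : ∀ i j, Integrable (fun ω => (∑ k, x ω k ^ 2) * (x ω i * x ω j)) μ)
    (σ : ℝ) (Sig : Matrix (Fin d) (Fin d) ℝ) (hSig : Sig.PosSemidef)
    (hSigle : ((σ ^ 2) • G - Sig).PosSemidef)
    (γ : ℝ) (hγ0 : 0 < γ) (hγR : γ < 1 / R ^ 2)
    (C : ℕ → Matrix (Fin d) (Fin d) ℝ)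
    (hC0 : C 0 = 0)
    (hCrec : ∀ t : ℕ, C (t + 1) =
      C t - γ • (G * C t + C t * G) +
        (γ ^ 2) • (Matrix.of fun i j => ∫ ω, x ω i * (x ω ⬝ᵥ (C t).mulVec (x ω)) * x ω j ∂μ) +
        (γ ^ 2) • Sig) :
    ∀ t : ℕ, ((γ * σ ^ 2 / (1 - γ * R ^ 2)) • (1 : Matrix (Fin d) (Fin d) ℝ) - C t).PosSemidef := by
  set α := γ * σ ^ 2 / (1 - γ * R ^ 2) with hαdef
  have hR2 : (0:ℝ) < R ^ 2 := by positivity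
  have hγR2 : γ * R ^ 2 < 1 := by
    have := (lt_div_iff₀ hR2).mp hγR; linarith
  have hden : (0:ℝ) < 1 - γ * R ^ 2 := by linarith
  have hα0 : 0 ≤ α := by
    rw [hαdef]
    exact div_nonneg (by positivity) hden.le
  have hαeq : α * (1 - γ * R ^ 2) = γ * σ ^ 2 := div_mul_cancel₀ _ hden.ne'
  have hdot : ∀ u : Fin d → ℝ, 0 ≤ u ⬝ᵥ u :=
    fun u => Finset.sum_nonneg fun i _ => mul_self_nonneg _
  have hpsd : ∀ (M : Matrix (Fin d) (Fin d) ℝ), M.PosSemidef →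
      ∀ y : Fin d → ℝ, 0 ≤ y ⬝ᵥ M.mulVec y := by
    intro M hM y; simpa using hM.dotProduct_mulVec_nonneg y
  -- G facts
  have hGqf : ∀ u w : Fin d → ℝ, u ⬝ᵥ G.mulVec w = ∫ ω, (u ⬝ᵥ x ω) * (x ω ⬝ᵥ w) ∂μ := by
    intro u w
    rw [hG, bf_integral (fun ω i j => x ω i * x ω j) hint2 u w]
    exact integral_congr_ae (Filter.Eventually.of_forall fun ω => oqf _ _ _)
  have hGint : ∀ u w : Fin d → ℝ, Integrable (fun ω => (u ⬝ᵥ x ω) * (x ω ⬝ᵥ w)) μ := by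
    intro u w
    have h := bf_integrable (fun ω i j => x ω i * x ω j) hint2 u w
    exact (funext fun ω => oqf (x ω) u w : _) ▸ h
  have hGh : G.IsHermitian := by
    rw [hG]; show _ᴴ = _; ext i j
    simp only [Matrix.conjTranspose_apply, Matrix.of_apply, star_trivial]
    exact integral_congr_ae (Filter.Eventually.of_forall fun ω => by ring)
  -- H (fourth moment with ‖x‖²) facts
  have hHqf : ∀ v : Fin d → ℝ,
      v ⬝ᵥ (Matrix.of fun i j => ∫ ω, (∑ k, x ω k ^ 2) * (x ω i * x ω j) ∂μ).mulVec v
        = ∫ ω, (∑ k, x ω k ^ 2) * ((v ⬝ᵥ x ω) * (x ω ⬝ᵥ v)) ∂μ := by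
    intro v
    rw [bf_integral (fun ω i j => (∑ k, x ω k ^ 2) * (x ω i * x ω j)) hintR v v]
    exact integral_congr_ae (Filter.Eventually.of_forall fun ω => nqf _ _ _ _)
  have hHint : ∀ v : Fin d → ℝ,
      Integrable (fun ω => (∑ k, x ω k ^ 2) * ((v ⬝ᵥ x ω) * (x ω ⬝ᵥ v))) μ := by
    intro v
    have h := bf_integrable (fun ω i j => (∑ k, x ω k ^ 2) * (x ω i * x ω j)) hintR v v
    exact (funext fun ω => nqf (x ω) v v _ : _) ▸ h
  suffices h : ∀ t, (C t).PosSemidef ∧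
      (α • (1 : Matrix (Fin d) (Fin d) ℝ) - C t).PosSemidef from fun t => (h t).2
  intro t
  induction t with
  | zero =>
    rw [hC0]
    constructor
    · exact Matrix.PosSemidef.zero
    · rw [sub_zero]
      refine Matrix.PosSemidef.of_dotProduct_mulVec_nonneg ?_ fun y => ?_
      · show _ᴴ = _
        rw [Matrix.conjTranspose_smul, Matrix.conjTranspose_one]; simp
      · simp only [Matrix.smul_mulVec, Matrix.one_mulVec, dotProduct_smul, smul_eq_mul,
          star_trivial]
        exact mul_nonneg hα0 (hdot y)
  | succ t ih =>
    obtain ⟨hP, hU⟩ := ih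
    have hsym : (C t).IsHermitian := hP.1
    have hCsymm : ∀ u w : Fin d → ℝ, u ⬝ᵥ (C t).mulVec w = w ⬝ᵥ (C t).mulVec u := by
      intro u w
      rw [qf_rep, qf_rep, Finset.sum_comm]
      refine Finset.sum_congr rfl fun i _ => Finset.sum_congr rfl fun j _ => ?_
      have h := congrFun (congrFun hsym.eq i) j
      simp only [Matrix.conjTranspose_apply, star_trivial] at h
      rw [← h]; ring
    -- main per-vector facts
    have main : ∀ v : Fin d → ℝ,
        0 ≤ v ⬝ᵥ (C (t+1)).mulVec v ∧ v ⬝ᵥ (C (t+1)).mulVec v ≤ α * (v ⬝ᵥ v) := by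
      intro v
      set K := v ⬝ᵥ (C t).mulVec v with hK
      -- integrable building blocks
      have i1 : Integrable (fun ω => (v ⬝ᵥ x ω) * (x ω ⬝ᵥ ((C t).mulVec v))) μ :=
        hGint v ((C t).mulVec v)
      have i2 : Integrable
          (fun ω => (v ⬝ᵥ x ω) * (x ω ⬝ᵥ v) * (x ω ⬝ᵥ (C t).mulVec (x ω))) μ := by
        have h := bf_integrable
          (fun ω i j => x ω i * (x ω ⬝ᵥ (C t).mulVec (x ω)) * x ω j) (hint4 (C t)) v v
        exact (funext fun ω => sqf (x ω) v v _ : _) ▸ h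
      have i3 : Integrable (fun ω => (v ⬝ᵥ x ω) * (x ω ⬝ᵥ v)) μ := hGint v v
      have i4 : Integrable (fun ω => (∑ k, x ω k ^ 2) * ((v ⬝ᵥ x ω) * (x ω ⬝ᵥ v))) μ :=
        hHint v
      -- pointwise expansion of the quadratic form of the recursion integrand
      have hq : ∀ ω, (v - (γ * (v ⬝ᵥ x ω)) • x ω) ⬝ᵥ
            (C t).mulVec (v - (γ * (v ⬝ᵥ x ω)) • x ω)
          = K - 2*γ*((v ⬝ᵥ x ω) * (x ω ⬝ᵥ ((C t).mulVec v)))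
            + γ^2*((v ⬝ᵥ x ω) * (x ω ⬝ᵥ v) * (x ω ⬝ᵥ (C t).mulVec (x ω))) := by
        intro ω
        have h1 : v ⬝ᵥ (C t).mulVec (x ω) = x ω ⬝ᵥ (C t).mulVec v := hCsymm v (x ω)
        have h2 : x ω ⬝ᵥ v = v ⬝ᵥ x ω := dotProduct_comm _ _
        simp only [Matrix.mulVec_sub, Matrix.mulVec_smul, dotProduct_sub, sub_dotProduct,
          dotProduct_smul, smul_dotProduct, smul_eq_mul, h1, h2, hK]
        ring
      have Iq : Integrable (fun ω => (v - (γ * (v ⬝ᵥ x ω)) • x ω) ⬝ᵥ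
          (C t).mulVec (v - (γ * (v ⬝ᵥ x ω)) • x ω)) μ := by
        rw [funext hq]
        exact ((integrable_const K).sub (i1.const_mul (2*γ))).add (i2.const_mul (γ^2))
      -- value of the integral of q
      have hQ : ∫ ω, (v - (γ * (v ⬝ᵥ x ω)) • x ω) ⬝ᵥ
            (C t).mulVec (v - (γ * (v ⬝ᵥ x ω)) • x ω) ∂μ
          = K - 2*γ*(∫ ω, (v ⬝ᵥ x ω) * (x ω ⬝ᵥ ((C t).mulVec v)) ∂μ)
            + γ^2*(∫ ω, (v ⬝ᵥ x ω) * (x ω ⬝ᵥ v) * (x ω ⬝ᵥ (C t).mulVec (x ω)) ∂μ) := by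
        have ia : Integrable (fun ω => K
            - 2*γ*((v ⬝ᵥ x ω) * (x ω ⬝ᵥ ((C t).mulVec v)))) μ :=
          (integrable_const K).sub (i1.const_mul (2*γ))
        have ib : Integrable (fun ω =>
            2*γ*((v ⬝ᵥ x ω) * (x ω ⬝ᵥ ((C t).mulVec v)))) μ := i1.const_mul (2*γ)
        have ic : Integrable (fun ω =>
            γ^2*((v ⬝ᵥ x ω) * (x ω ⬝ᵥ v) * (x ω ⬝ᵥ (C t).mulVec (x ω)))) μ :=
          i2.const_mul (γ^2)
        rw [funext hq, integral_add ia ic, integral_sub (integrable_const K) ib,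
          integral_const, integral_const_mul, integral_const_mul]
        simp [measure_univ]
      -- key identity
      have key : v ⬝ᵥ (C (t+1)).mulVec v
          = (∫ ω, (v - (γ * (v ⬝ᵥ x ω)) • x ω) ⬝ᵥ
              (C t).mulVec (v - (γ * (v ⬝ᵥ x ω)) • x ω) ∂μ)
            + γ^2 * (v ⬝ᵥ Sig.mulVec v) := by
        have hGC : v ⬝ᵥ (G * C t).mulVec v
            = ∫ ω, (v ⬝ᵥ x ω) * (x ω ⬝ᵥ ((C t).mulVec v)) ∂μ := by
          rw [← Matrix.mulVec_mulVec]
          exact hGqf v ((C t).mulVec v)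
        have hCG : v ⬝ᵥ (C t * G).mulVec v
            = ∫ ω, (v ⬝ᵥ x ω) * (x ω ⬝ᵥ ((C t).mulVec v)) ∂μ := by
          rw [← Matrix.mulVec_mulVec, hCsymm v (G.mulVec v), dotProduct_comm,
            hGqf ((C t).mulVec v) v]
          refine integral_congr_ae (Filter.Eventually.of_forall fun ω => ?_)
          dsimp only
          rw [dotProduct_comm (x ω) v, dotProduct_comm ((C t).mulVec v) (x ω)]; ring
        have hF : v ⬝ᵥ (Matrix.of fun i j =>
              ∫ ω, x ω i * (x ω ⬝ᵥ (C t).mulVec (x ω)) * x ω j ∂μ).mulVec v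
            = ∫ ω, (v ⬝ᵥ x ω) * (x ω ⬝ᵥ v) * (x ω ⬝ᵥ (C t).mulVec (x ω)) ∂μ := by
          rw [bf_integral (fun ω i j => x ω i * (x ω ⬝ᵥ (C t).mulVec (x ω)) * x ω j)
            (hint4 (C t)) v v]
          exact integral_congr_ae (Filter.Eventually.of_forall fun ω => sqf _ _ _ _)
        rw [hCrec t]
        simp only [Matrix.add_mulVec, Matrix.sub_mulVec, Matrix.smul_mulVec,
          dotProduct_add, dotProduct_sub, dotProduct_smul, smul_eq_mul]
        rw [hGC, hCG, hF, hQ]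
        ring
      -- nonnegativity
      have hqnn : 0 ≤ ∫ ω, (v - (γ * (v ⬝ᵥ x ω)) • x ω) ⬝ᵥ
          (C t).mulVec (v - (γ * (v ⬝ᵥ x ω)) • x ω) ∂μ :=
        integral_nonneg fun ω => hpsd _ hP _
      constructor
      · rw [key]
        have := hpsd _ hSig v
        positivity
      -- upper bound
      · have hpt : ∀ ω, (v - (γ * (v ⬝ᵥ x ω)) • x ω) ⬝ᵥ
            (C t).mulVec (v - (γ * (v ⬝ᵥ x ω)) • x ω)
            ≤ α * ((v - (γ * (v ⬝ᵥ x ω)) • x ω) ⬝ᵥ (v - (γ * (v ⬝ᵥ x ω)) • x ω)) := by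
          intro ω
          have h := hpsd _ hU (v - (γ * (v ⬝ᵥ x ω)) • x ω)
          rw [Matrix.sub_mulVec, Matrix.smul_mulVec, Matrix.one_mulVec,
            dotProduct_sub, dotProduct_smul, smul_eq_mul] at h
          linarith
        have hn : ∀ ω, x ω ⬝ᵥ x ω = ∑ k, x ω k ^ 2 := by
          intro ω
          simp [dotProduct, pow_two]
        have hr : ∀ ω, α * ((v - (γ * (v ⬝ᵥ x ω)) • x ω) ⬝ᵥ (v - (γ * (v ⬝ᵥ x ω)) • x ω))
            = α * (v ⬝ᵥ v) - 2*γ*α*((v ⬝ᵥ x ω) * (x ω ⬝ᵥ v))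
              + γ^2*α*((∑ k, x ω k ^ 2) * ((v ⬝ᵥ x ω) * (x ω ⬝ᵥ v))) := by
          intro ω
          have h2 : x ω ⬝ᵥ v = v ⬝ᵥ x ω := dotProduct_comm _ _
          simp only [dotProduct_sub, sub_dotProduct, dotProduct_smul, smul_dotProduct,
            smul_eq_mul, h2, ← hn ω]
          ring
        have Ir : Integrable (fun ω => α * ((v - (γ * (v ⬝ᵥ x ω)) • x ω) ⬝ᵥ
            (v - (γ * (v ⬝ᵥ x ω)) • x ω))) μ := by
          rw [funext hr]
          exact (((integrable_const (α * (v ⬝ᵥ v))).sub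
            (i3.const_mul (2*γ*α))).add (i4.const_mul (γ^2*α)))
        have hIr : ∫ ω, α * ((v - (γ * (v ⬝ᵥ x ω)) • x ω) ⬝ᵥ
              (v - (γ * (v ⬝ᵥ x ω)) • x ω)) ∂μ
            = α * (v ⬝ᵥ v) - 2*γ*α*(v ⬝ᵥ G.mulVec v)
              + γ^2*α*(∫ ω, (∑ k, x ω k ^ 2) * ((v ⬝ᵥ x ω) * (x ω ⬝ᵥ v)) ∂μ) := by
          have ia : Integrable (fun ω => α * (v ⬝ᵥ v)
              - 2*γ*α*((v ⬝ᵥ x ω) * (x ω ⬝ᵥ v))) μ :=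
            (integrable_const (α * (v ⬝ᵥ v))).sub (i3.const_mul (2*γ*α))
          have ib : Integrable (fun ω => 2*γ*α*((v ⬝ᵥ x ω) * (x ω ⬝ᵥ v))) μ :=
            i3.const_mul (2*γ*α)
          have ic : Integrable (fun ω =>
              γ^2*α*((∑ k, x ω k ^ 2) * ((v ⬝ᵥ x ω) * (x ω ⬝ᵥ v)))) μ :=
            i4.const_mul (γ^2*α)
          rw [funext hr, integral_add ia ic,
            integral_sub (integrable_const (α * (v ⬝ᵥ v))) ib,
            integral_const, integral_const_mul, integral_const_mul, ← hGqf v v]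
          simp [measure_univ]
        have hmono : ∫ ω, (v - (γ * (v ⬝ᵥ x ω)) • x ω) ⬝ᵥ
              (C t).mulVec (v - (γ * (v ⬝ᵥ x ω)) • x ω) ∂μ
            ≤ ∫ ω, α * ((v - (γ * (v ⬝ᵥ x ω)) • x ω) ⬝ᵥ
              (v - (γ * (v ⬝ᵥ x ω)) • x ω)) ∂μ :=
          integral_mono Iq Ir hpt
        -- the fourth moment bound
        have h4 : ∫ ω, (∑ k, x ω k ^ 2) * ((v ⬝ᵥ x ω) * (x ω ⬝ᵥ v)) ∂μ
            ≤ R^2 * (v ⬝ᵥ G.mulVec v) := by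
          have h := hpsd _ hfourth v
          simp only [Matrix.sub_mulVec, Matrix.smul_mulVec, dotProduct_sub,
            dotProduct_smul, smul_eq_mul] at h
          rw [hHqf v] at h
          linarith
        have hS : v ⬝ᵥ Sig.mulVec v ≤ σ^2 * (v ⬝ᵥ G.mulVec v) := by
          have h := hpsd _ hSigle v
          simp only [Matrix.sub_mulVec, Matrix.smul_mulVec, dotProduct_sub,
            dotProduct_smul, smul_eq_mul] at h
          linarith
        have hg0 : 0 ≤ v ⬝ᵥ G.mulVec v := by
          rw [hGqf v v]
          exact integral_nonneg fun ω => by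
            rw [dotProduct_comm (x ω) v]; exact mul_self_nonneg _
        rw [key]
        nlinarith [mul_le_mul_of_nonneg_left h4 (by positivity : (0:ℝ) ≤ γ^2*α),
          mul_le_mul_of_nonneg_left hS (by positivity : (0:ℝ) ≤ γ^2),
          mul_nonneg (mul_nonneg hα0 hγ0.le) hg0,
          mul_le_mul_of_nonneg_right (le_of_eq hαeq) hg0,
          mul_le_mul_of_nonneg_right (le_of_eq hαeq.symm) hg0]
    -- hermitian facts
    have hFh : (Matrix.of fun i j =>
        ∫ ω, x ω i * (x ω ⬝ᵥ (C t).mulVec (x ω)) * x ω j ∂μ).IsHermitian := by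
      show _ᴴ = _; ext i j
      simp only [Matrix.conjTranspose_apply, Matrix.of_apply, star_trivial]
      exact integral_congr_ae (Filter.Eventually.of_forall fun ω => by ring)
    have hsm : ∀ (c : ℝ) (A : Matrix (Fin d) (Fin d) ℝ),
        A.IsHermitian → (c • A).IsHermitian := by
      intro c A hA
      show _ᴴ = _
      rw [Matrix.conjTranspose_smul, hA.eq]
      simp
    have hGCh : (G * C t + C t * G).IsHermitian := by
      show _ᴴ = _
      rw [Matrix.conjTranspose_add, Matrix.conjTranspose_mul, Matrix.conjTranspose_mul,
        hsym.eq, hGh.eq, add_comm]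
    have hC1h : (C (t+1)).IsHermitian := by
      rw [hCrec t]
      exact ((hsym.sub (hsm γ _ hGCh)).add (hsm (γ^2) _ hFh)).add (hsm (γ^2) _ hSig.1)
    constructor
    · exact Matrix.PosSemidef.of_dotProduct_mulVec_nonneg hC1h fun y => by simpa using (main y).1
    · refine Matrix.PosSemidef.of_dotProduct_mulVec_nonneg ((hsm α _ Matrix.isHermitian_one).sub hC1h) fun y => ?_
      have h := (main y).2
      simp only [Matrix.sub_mulVec, Matrix.smul_mulVec, Matrix.one_mulVec,
        dotProduct_sub, dotProduct_smul, smul_eq_mul, star_trivial]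
      linarith
end

section
/- Let $H$ be a symmetric PSD matrix with eigenvalues $\lambda_i$ and orthonormal eigenvectors $v_i$, let $n \geq 1$ and $0 < \gamma$ with $\gamma\lambda_i \leq 1$ for all $i$, and let $K = \{i : \lambda_i \geq 1/(n\gamma)\}$. Then $\gamma (I - \tfrac{\gamma}{2} H)^{2n} H \preceq \frac{8}{n^2\gamma}\left(\sum_{i\in K}\frac{1}{\lambda_i}v_iv_i^\top + n^2\gamma^2\sum_{i\notin K}\lambda_i v_iv_i^\top\right)$. -/
open Finset Matrix

/-- Bernoulli-style bound: `(1-u)^m ≤ 1/(m*u)` for `0 < u ≤ 1`. -/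
lemma aux_pow_le {u : ℝ} (hu : 0 < u) (hu1 : u ≤ 1) (m : ℕ) (hm : 1 ≤ m) :
    (1 - u) ^ m ≤ 1 / (m * u) := by
  have hmu : 0 < (m : ℝ) * u := by positivity
  have h1 : (1 : ℝ) + (m : ℝ) * u ≤ (1 + u) ^ m := by
    have := one_add_mul_le_pow (a := u) (by linarith) m
    linarith
  have h2 : (1 - u) ^ m * (1 + u) ^ m ≤ 1 := by
    rw [← mul_pow]
    calc ((1 - u) * (1 + u)) ^ m ≤ 1 ^ m := by
          apply pow_le_pow_left₀ (by nlinarith) (by nlinarith)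
      _ = 1 := one_pow m
  have hpos : (0 : ℝ) < (1 + u) ^ m := by positivity
  have h3 : (1 - u) ^ m ≤ 1 / (1 + u) ^ m := by
    rw [le_div_iff₀ hpos]; exact h2
  have h4 : 1 / (1 + u) ^ m ≤ 1 / (1 + (m : ℝ) * u) := by
    apply one_div_le_one_div_of_le (by linarith) h1
  have h5 : 1 / (1 + (m : ℝ) * u) ≤ 1 / ((m : ℝ) * u) :=
    one_div_le_one_div_of_le hmu (by linarith)
  linarith

lemma aux_vecMulVec_mul {d : ℕ} (a b c e : Fin d → ℝ) :
    Matrix.vecMulVec a b * Matrix.vecMulVec c e = (b ⬝ᵥ c) • Matrix.vecMulVec a e := by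
  ext i j
  simp only [Matrix.mul_apply, Matrix.vecMulVec_apply, Matrix.smul_apply, smul_eq_mul,
    dotProduct]
  rw [Finset.sum_mul]
  congr 1; ext k; ring

lemma aux_vecMulVec_mulVec {d : ℕ} (a : Fin d → ℝ) (x : Fin d → ℝ) :
    (Matrix.vecMulVec a a).mulVec x = (a ⬝ᵥ x) • a := by
  ext i
  simp only [Matrix.mulVec, dotProduct, Matrix.vecMulVec_apply, Pi.smul_apply,
    smul_eq_mul]
  rw [Finset.sum_mul]
  congr 1; ext k; ring

lemma aux_psd_sum {d : ℕ} (v : Fin d → Fin d → ℝ) (c : Fin d → ℝ) (hc : ∀ i, 0 ≤ c i) :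
    (∑ i, c i • Matrix.vecMulVec (v i) (v i)).PosSemidef := by
  rw [Matrix.posSemidef_iff_dotProduct_mulVec]
  constructor
  · show _ = _
    rw [Matrix.conjTranspose_sum]
    refine Finset.sum_congr rfl fun i _ => ?_
    ext a b
    simp [Matrix.conjTranspose_apply, Matrix.vecMulVec_apply, mul_comm]
  · intro x
    have h1 : (∑ i, c i • Matrix.vecMulVec (v i) (v i)) *ᵥ x
        = ∑ i, (c i • Matrix.vecMulVec (v i) (v i)) *ᵥ x := by
      ext a
      simp only [Matrix.mulVec, dotProduct, Finset.sum_apply, Matrix.sum_apply,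
        Finset.sum_mul]
      rw [Finset.sum_comm]
    have h2 : x ⬝ᵥ (∑ i, (c i • Matrix.vecMulVec (v i) (v i)) *ᵥ x)
        = ∑ i, x ⬝ᵥ ((c i • Matrix.vecMulVec (v i) (v i)) *ᵥ x) := by
      simp only [dotProduct, Finset.sum_apply, Finset.mul_sum]
      rw [Finset.sum_comm]
    rw [star_trivial, h1, h2]
    refine Finset.sum_nonneg fun i _ => ?_
    rw [Matrix.smul_mulVec, aux_vecMulVec_mulVec, dotProduct_smul,
      dotProduct_smul, smul_eq_mul, smul_eq_mul]
    have hcomm : x ⬝ᵥ v i = v i ⬝ᵥ x := dotProduct_comm _ _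
    rw [hcomm]
    exact mul_nonneg (hc i) (mul_self_nonneg _)

set_option maxHeartbeats 1600000 in
theorem stmt11 {d : ℕ} (H : Matrix (Fin d) (Fin d) ℝ)
    (lam : Fin d → ℝ) (v : Fin d → Fin d → ℝ)
    (horth : ∀ i j, v i ⬝ᵥ v j = if i = j then (1 : ℝ) else 0)
    (hdecomp : H = ∑ i, lam i • Matrix.vecMulVec (v i) (v i))
    (hlam : ∀ i, 0 ≤ lam i)
    (γ : ℝ) (hγ : 0 < γ) (hspec : ∀ i, γ * lam i ≤ 1)
    (n : ℕ) (hn : 1 ≤ n) :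
    ((8 / ((n : ℝ) ^ 2 * γ)) •
        ((∑ i ∈ Finset.univ.filter (fun i => 1 / ((n : ℝ) * γ) ≤ lam i),
            (1 / lam i) • Matrix.vecMulVec (v i) (v i)) +
          ((n : ℝ) ^ 2 * γ ^ 2) •
            ∑ i ∈ Finset.univ.filter (fun i => ¬ (1 / ((n : ℝ) * γ) ≤ lam i)),
              lam i • Matrix.vecMulVec (v i) (v i)) -
      γ • (((1 : Matrix (Fin d) (Fin d) ℝ) - (γ / 2) • H) ^ (2 * n) * H)).PosSemidef := by
  set P : Fin d → Matrix (Fin d) (Fin d) ℝ := fun i => Matrix.vecMulVec (v i) (v i) with hP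
  have hnR : (0 : ℝ) < (n : ℝ) := by exact_mod_cast Nat.lt_of_lt_of_le Nat.zero_lt_one hn
  -- H * P j = lam j • P j
  have hHP : ∀ j, H * P j = lam j • P j := by
    intro j
    rw [hdecomp, Finset.sum_mul]
    have : ∀ i, lam i • P i * P j = (if i = j then lam j • P j else 0) := by
      intro i
      rw [hP, smul_mul_assoc, aux_vecMulVec_mul, horth]
      by_cases h : i = j
      · subst h; simp
      · simp [h]
    rw [Finset.sum_congr rfl fun i _ => this i]
    simp
  -- key: (1 - (γ/2)•H)^m * H = ∑ i, (lam i * (1 - γ/2 * lam i)^m) • P i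
  have key : ∀ m : ℕ, ((1 : Matrix (Fin d) (Fin d) ℝ) - (γ / 2) • H) ^ m * H
      = ∑ i, (lam i * (1 - γ / 2 * lam i) ^ m) • P i := by
    intro m
    induction m with
    | zero => simpa using hdecomp
    | succ m ih =>
      rw [pow_succ', mul_assoc, ih, sub_mul, one_mul, smul_mul_assoc, Finset.mul_sum]
      simp_rw [mul_smul_comm, hHP, smul_smul, Finset.smul_sum, smul_smul]
      rw [← Finset.sum_sub_distrib]
      refine Finset.sum_congr rfl fun i _ => ?_
      rw [← sub_smul]
      congr 1; ring
  -- rewrite filtered sums as sums with if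
  have hfilter1 : (∑ i ∈ Finset.univ.filter (fun i => 1 / ((n : ℝ) * γ) ≤ lam i),
      (1 / lam i) • P i)
      = ∑ i, (if 1 / ((n : ℝ) * γ) ≤ lam i then (1 / lam i) else 0) • P i := by
    rw [Finset.sum_filter]
    refine Finset.sum_congr rfl fun i _ => ?_
    split_ifs with h
    · rfl
    · rw [zero_smul]
  have hfilter2 : (∑ i ∈ Finset.univ.filter (fun i => ¬ (1 / ((n : ℝ) * γ) ≤ lam i)),
      lam i • P i)
      = ∑ i, (if 1 / ((n : ℝ) * γ) ≤ lam i then 0 else lam i) • P i := by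
    rw [Finset.sum_filter]
    refine Finset.sum_congr rfl fun i _ => ?_
    split_ifs with h
    · rw [zero_smul]
    · rfl
  set c : Fin d → ℝ := fun i =>
    (if 1 / ((n : ℝ) * γ) ≤ lam i then 8 / ((n : ℝ) ^ 2 * γ) * (1 / lam i)
      else 8 * γ * lam i) - γ * (lam i * (1 - γ / 2 * lam i) ^ (2 * n)) with hc
  have heq : ((8 / ((n : ℝ) ^ 2 * γ)) •
        ((∑ i ∈ Finset.univ.filter (fun i => 1 / ((n : ℝ) * γ) ≤ lam i),
            (1 / lam i) • Matrix.vecMulVec (v i) (v i)) +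
          ((n : ℝ) ^ 2 * γ ^ 2) •
            ∑ i ∈ Finset.univ.filter (fun i => ¬ (1 / ((n : ℝ) * γ) ≤ lam i)),
              lam i • Matrix.vecMulVec (v i) (v i)) -
      γ • (((1 : Matrix (Fin d) (Fin d) ℝ) - (γ / 2) • H) ^ (2 * n) * H))
      = ∑ i, c i • P i := by
    rw [key, hfilter1, hfilter2]
    simp only [smul_add, Finset.smul_sum, smul_smul]
    rw [← Finset.sum_add_distrib, ← Finset.sum_sub_distrib]
    refine Finset.sum_congr rfl fun i _ => ?_
    rw [← add_smul, ← sub_smul]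
    congr 1
    simp only [hc]
    have hne : (n : ℝ) ≠ 0 := hnR.ne'
    split_ifs with h
    · ring
    · field_simp
      ring
  rw [heq]
  apply aux_psd_sum
  intro i
  simp only [hc]
  have hx0 : 0 ≤ γ * lam i := mul_nonneg hγ.le (hlam i)
  have hx1 : γ * lam i ≤ 1 := hspec i
  have hbase : (0:ℝ) ≤ 1 - γ / 2 * lam i := by nlinarith
  have hbase1 : 1 - γ / 2 * lam i ≤ 1 := by nlinarith
  have hpow1 : (1 - γ / 2 * lam i) ^ (2 * n) ≤ 1 := pow_le_one₀ hbase hbase1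
  have hpownn : (0:ℝ) ≤ (1 - γ / 2 * lam i) ^ (2 * n) := pow_nonneg hbase _
  split_ifs with h
  · -- head case: lam i ≥ 1/(nγ) > 0
    have hlpos : 0 < lam i := lt_of_lt_of_le (by positivity) h
    have hu : 0 < γ * lam i / 2 := by positivity
    have hb := aux_pow_le (u := γ * lam i / 2) hu (by linarith) n hn
    have hb' : (1 - γ / 2 * lam i) ^ n ≤ 2 / ((n : ℝ) * (γ * lam i)) := by
      have e1 : (1 : ℝ) / ((n : ℝ) * (γ * lam i / 2)) = 2 / ((n : ℝ) * (γ * lam i)) := by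
        rw [div_eq_div_iff (by positivity) (by positivity)]; ring
      have e2 : 1 - γ * lam i / 2 = 1 - γ / 2 * lam i := by ring
      rw [e1, e2] at hb
      exact hb
    have hpow2 : (1 - γ / 2 * lam i) ^ (2 * n) ≤ (2 / ((n : ℝ) * (γ * lam i))) ^ 2 := by
      have : (1 - γ / 2 * lam i) ^ (2 * n) = ((1 - γ / 2 * lam i) ^ n) ^ 2 := by
        rw [← pow_mul]; ring_nf
      rw [this]
      exact pow_le_pow_left₀ (pow_nonneg hbase _) hb' 2
    have hrhs : (2 / ((n : ℝ) * (γ * lam i))) ^ 2 = 4 / ((n : ℝ) ^ 2 * (γ * lam i) ^ 2) := by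
      rw [div_pow]
      norm_num
      ring_nf
    have h1 : γ * (lam i * (1 - γ / 2 * lam i) ^ (2 * n))
        ≤ γ * lam i * (4 / ((n : ℝ) ^ 2 * (γ * lam i) ^ 2)) := by
      rw [hrhs] at hpow2
      have := mul_le_mul_of_nonneg_left hpow2 hx0
      nlinarith [this]
    have h2 : γ * lam i * (4 / ((n : ℝ) ^ 2 * (γ * lam i) ^ 2))
        = 4 / ((n : ℝ) ^ 2 * (γ * lam i)) := by
      have hne : (n : ℝ) ^ 2 * (γ * lam i) ^ 2 ≠ 0 := by positivity
      field_simp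
    have h3 : 4 / ((n : ℝ) ^ 2 * (γ * lam i)) ≤ 8 / ((n : ℝ) ^ 2 * γ) * (1 / lam i) := by
      have e3 : 8 / ((n : ℝ) ^ 2 * γ) * (1 / lam i) = 8 / ((n : ℝ) ^ 2 * (γ * lam i)) := by
        have hne : (n : ℝ) ≠ 0 := hnR.ne'
        field_simp
      rw [e3]
      have hX : (0:ℝ) < (n : ℝ) ^ 2 * (γ * lam i) := by positivity
      rw [div_le_div_iff₀ hX hX]
      nlinarith
    linarith
  · -- tail case
    have hle : γ * (lam i * (1 - γ / 2 * lam i) ^ (2 * n)) ≤ γ * lam i := by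
      have h1 : γ * lam i * (1 - γ / 2 * lam i) ^ (2 * n) ≤ γ * lam i * 1 :=
        mul_le_mul_of_nonneg_left hpow1 hx0
      calc γ * (lam i * (1 - γ / 2 * lam i) ^ (2 * n))
          = γ * lam i * (1 - γ / 2 * lam i) ^ (2 * n) := by ring
        _ ≤ γ * lam i * 1 := h1
        _ = γ * lam i := mul_one _
    nlinarith [hle, hx0]
end
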